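/- Let W be a finite Coxeter group and w ∈ W an involution, s a simple reflection. If ℓ(sws) = ℓ(w) and sws is an involution, then sws = w. -/

import Mathlib

open CoxeterSystem

/-- Bruhat order on a Coxeter group: `u ≤ v` iff there is a chain from `u` to `v`, each step
multiplying on the right by a reflection and strictly increasing the length. -/
def BruhatLE {B W : Type*} [Group W] {M : CoxeterMatrix B} (cs : CoxeterSystem M W)
    (u v : W) : Prop :=
  Relation.ReflTransGen
    (fun x y => ∃ t, cs.IsReflection t ∧ y = x * t ∧ cs.length x < cs.length y) u v


open CoxeterSystem

namespace Stmt5Aux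

open scoped Classical

variable {B W : Type*} [Group W] {M : CoxeterMatrix B} (cs : CoxeterSystem M W)

theorem conj_iff (x u c : W) : (c * x * c⁻¹ = u) ↔ (x = c⁻¹ * u * c) := by
  constructor
  · rintro rfl; group
  · rintro rfl; group

/-- The basic map in the reflection representation on `W × ZMod 2`. -/
noncomputable def pre (i : B) : W × ZMod 2 → W × ZMod 2 :=
  fun p => (cs.simple i * p.1 * cs.simple i, p.2 + if p.1 = cs.simple i then 1 else 0)

theorem simple_conj_iff (i : B) (t u : W) :
    (cs.simple i * t * cs.simple i = u) ↔ (t = cs.simple i * u * cs.simple i) := by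
  constructor
  · intro h
    rw [← h]
    simp [mul_assoc, cs.simple_mul_simple_self, cs.simple_mul_simple_cancel_left]
  · rintro rfl
    simp [mul_assoc, cs.simple_mul_simple_self, cs.simple_mul_simple_cancel_left]

theorem pre_involutive (i : B) : Function.Involutive (pre cs i) := by
  rintro ⟨t, e⟩
  have hconj : (cs.simple i * t * cs.simple i = cs.simple i) ↔ (t = cs.simple i) := by
    rw [simple_conj_iff]
    simp [mul_assoc, cs.simple_mul_simple_self, cs.simple_mul_simple_cancel_left]
  unfold pre
  refine Prod.ext ?_ ?_
  · simp [mul_assoc, cs.simple_mul_simple_self, cs.simple_mul_simple_cancel_left]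
  · simp only [if_congr hconj rfl rfl]
    by_cases h : t = cs.simple i <;>
      simp [h, add_assoc, CharTwo.add_self_eq_zero]

/-- The permutation of `W × ZMod 2` associated to a simple reflection. -/
noncomputable def perm (i : B) : Equiv.Perm (W × ZMod 2) :=
  Function.Involutive.toPerm (pre cs i) (pre_involutive cs i)

theorem perm_apply (i : B) (p : W × ZMod 2) : perm cs i p = pre cs i p := rfl

theorem sandwich (i j : B) (n : ℕ) :
    (cs.simple i * cs.simple j)⁻¹ * (cs.simple j * (cs.simple i * cs.simple j) ^ n)
      * (cs.simple i * cs.simple j)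
    = cs.simple j * (cs.simple i * cs.simple j) ^ (n + 2) := by
  have hkey : (cs.simple i * cs.simple j)⁻¹ * cs.simple j
      = cs.simple j * (cs.simple i * cs.simple j) := by
    rw [mul_inv_rev, cs.inv_simple, cs.inv_simple, mul_assoc]
  calc (cs.simple i * cs.simple j)⁻¹ * (cs.simple j * (cs.simple i * cs.simple j) ^ n)
        * (cs.simple i * cs.simple j)
      = ((cs.simple i * cs.simple j)⁻¹ * cs.simple j) * (cs.simple i * cs.simple j) ^ n
        * (cs.simple i * cs.simple j) := by simp only [mul_assoc]
    _ = cs.simple j * ((cs.simple i * cs.simple j) * (cs.simple i * cs.simple j) ^ n)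
        * (cs.simple i * cs.simple j) := by rw [hkey, mul_assoc (cs.simple j)]
    _ = cs.simple j * ((cs.simple i * cs.simple j) ^ (n + 1) * (cs.simple i * cs.simple j)) := by
        rw [← pow_succ', mul_assoc]
    _ = cs.simple j * (cs.simple i * cs.simple j) ^ (n + 2) := by rw [← pow_succ]

theorem pow_mul_perm_apply (i j : B) (k : ℕ) (t : W) (e : ZMod 2) :
    ((perm cs i * perm cs j) ^ k) (t, e) =
      ((cs.simple i * cs.simple j) ^ k * t * ((cs.simple i * cs.simple j) ^ k)⁻¹,
        e + ∑ n ∈ Finset.range (2 * k),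
          (if t = cs.simple j * (cs.simple i * cs.simple j) ^ n then (1 : ZMod 2) else 0)) := by
  induction k generalizing t e with
  | zero => simp
  | succ k ih =>
    have hstep : (perm cs i * perm cs j) (t, e) =
        ((cs.simple i * cs.simple j) * t * (cs.simple i * cs.simple j)⁻¹,
          e + ((if t = cs.simple j * (cs.simple i * cs.simple j) ^ 0 then (1 : ZMod 2) else 0)
            + (if t = cs.simple j * (cs.simple i * cs.simple j) ^ 1 then (1 : ZMod 2) else 0))) := by
      rw [Equiv.Perm.mul_apply, perm_apply, perm_apply]
      unfold pre
      refine Prod.ext ?_ ?_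
      · simp only [mul_inv_rev, cs.inv_simple]
        group
      · have h1 : (cs.simple j * t * cs.simple j = cs.simple i)
            ↔ (t = cs.simple j * (cs.simple i * cs.simple j) ^ 1) := by
          rw [pow_one, simple_conj_iff, mul_assoc]
        have h0 : (t = cs.simple j)
            ↔ (t = cs.simple j * (cs.simple i * cs.simple j) ^ 0) := by
          rw [pow_zero, mul_one]
        simp only [if_congr h1 rfl rfl, if_congr h0 rfl rfl]
        ring
    rw [pow_succ, Equiv.Perm.mul_apply, hstep, ih]
    have hconj : ∀ n : ℕ,
        ((cs.simple i * cs.simple j) * t * (cs.simple i * cs.simple j)⁻¹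
          = cs.simple j * (cs.simple i * cs.simple j) ^ n)
        ↔ (t = cs.simple j * (cs.simple i * cs.simple j) ^ (n + 2)) := by
      intro n
      rw [conj_iff, sandwich]
    refine Prod.ext ?_ ?_
    · simp only [pow_succ, mul_inv_rev, cs.inv_simple, mul_assoc]
    · simp only [if_congr (hconj _) rfl rfl]
      rw [show 2 * (k + 1) = (2 * k + 1) + 1 by ring, Finset.sum_range_succ',
        Finset.sum_range_succ']
      simp only [pow_zero, mul_one, zero_add]
      ring

theorem liftable : M.IsLiftable (fun i => perm cs i) := by
  intro i j
  refine Equiv.ext ?_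
  rintro ⟨t, e⟩
  rw [pow_mul_perm_apply, cs.simple_mul_simple_pow i j]
  have hper : ∀ n : ℕ,
      (if t = cs.simple j * (cs.simple i * cs.simple j) ^ (M i j + n) then (1 : ZMod 2) else 0)
      = (if t = cs.simple j * (cs.simple i * cs.simple j) ^ n then (1 : ZMod 2) else 0) := by
    intro n
    rw [pow_add, cs.simple_mul_simple_pow i j, one_mul]
  rw [two_mul, Finset.sum_range_add]
  simp only [hper]
  rw [CharTwo.add_self_eq_zero]
  simp

/-- The lifted homomorphism. -/
noncomputable def phi : W →* Equiv.Perm (W × ZMod 2) :=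
  cs.lift ⟨fun i => perm cs i, liftable cs⟩

theorem phi_simple (i : B) : phi cs (cs.simple i) = perm cs i :=
  cs.lift_apply_simple (liftable cs) i

theorem phi_wordProd_of_not_mem (ω : List B) (t : W) (e : ZMod 2)
    (ht : t ∉ cs.rightInvSeq ω) :
    phi cs (cs.wordProd ω) (t, e) = (cs.wordProd ω * t * (cs.wordProd ω)⁻¹, e) := by
  induction ω generalizing e with
  | nil => simp
  | cons i ω ih =>
    have hris : cs.rightInvSeq (i :: ω)
        = ((cs.wordProd ω)⁻¹ * cs.simple i * cs.wordProd ω) :: cs.rightInvSeq ω := rfl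
    rw [hris] at ht
    rw [List.mem_cons] at ht
    push_neg at ht
    obtain ⟨ht1, ht2⟩ := ht
    rw [cs.wordProd_cons, map_mul, Equiv.Perm.mul_apply, ih e ht2, phi_simple, perm_apply]
    unfold pre
    have hne : ¬ (cs.wordProd ω * t * (cs.wordProd ω)⁻¹ = cs.simple i) := by
      rw [conj_iff]
      intro h
      exact ht1 h
    refine Prod.ext ?_ ?_
    · simp only
      rw [mul_inv_rev, cs.inv_simple]
      group
    · simp [hne]

theorem exchange {ω : List B} (hred : cs.IsReduced ω) {i : B}
    (hdesc : cs.length (cs.wordProd ω * cs.simple i) < cs.length (cs.wordProd ω)) :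
    ∃ j < ω.length, cs.wordProd ω * cs.simple i = cs.wordProd (ω.eraseIdx j) := by
  obtain ⟨ω', hl', hw'⟩ := cs.exists_reduced_word (cs.wordProd ω * cs.simple i)
  have hred' : cs.IsReduced ω' := by
    show cs.length (cs.wordProd ω') = ω'.length
    exact hl'
  have hnotmem : cs.simple i ∉ cs.rightInvSeq ω' := by
    intro hmem
    have h2 := (cs.isRightInversion_of_mem_rightInvSeq hred' hmem).2
    rw [← hw', cs.simple_mul_simple_cancel_right] at h2
    omega
  have hfact : cs.wordProd ω = cs.wordProd ω' * cs.simple i := by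
    rw [← hw', cs.simple_mul_simple_cancel_right]
  have h1 : phi cs (cs.wordProd ω) (cs.simple i, 0)
      = (cs.wordProd ω' * cs.simple i * (cs.wordProd ω')⁻¹, 1) := by
    rw [hfact, map_mul, Equiv.Perm.mul_apply, phi_simple, perm_apply]
    show phi cs (cs.wordProd ω')
      (cs.simple i * cs.simple i * cs.simple i,
        0 + if cs.simple i = cs.simple i then 1 else 0) = _
    rw [cs.simple_mul_simple_self, one_mul, if_pos rfl, zero_add,
      phi_wordProd_of_not_mem cs ω' (cs.simple i) 1 hnotmem]
  have hmem : cs.simple i ∈ cs.rightInvSeq ω := by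
    by_contra hnot
    have h0 := phi_wordProd_of_not_mem cs ω (cs.simple i) 0 hnot
    rw [h1] at h0
    have h2 := congrArg Prod.snd h0
    simp at h2
  obtain ⟨j, hj, hget⟩ := List.mem_iff_getElem.mp hmem
  rw [cs.length_rightInvSeq] at hj
  refine ⟨j, hj, ?_⟩
  have := cs.wordProd_mul_getD_rightInvSeq ω j
  rwa [List.getD_eq_getElem _ _ (by rwa [cs.length_rightInvSeq]), hget] at this

theorem claim (u : W) (i : B)
    (h1 : cs.length (cs.simple i * u) = cs.length u + 1)
    (h2 : cs.length (u * cs.simple i) = cs.length u + 1)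
    (h3 : cs.length (cs.simple i * u * cs.simple i) = cs.length u) :
    cs.simple i * u * cs.simple i = u := by
  obtain ⟨ω, hl, hu⟩ := cs.exists_reduced_word u
  have hred : cs.IsReduced (i :: ω) := by
    show cs.length (cs.wordProd (i :: ω)) = (i :: ω).length
    rw [cs.wordProd_cons, ← hu, h1, List.length_cons, hu]
    exact congrArg (· + 1) hl
  have hπ : cs.wordProd (i :: ω) = cs.simple i * u := by rw [cs.wordProd_cons, ← hu]
  have hdesc : cs.length (cs.wordProd (i :: ω) * cs.simple i)
      < cs.length (cs.wordProd (i :: ω)) := by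
    rw [hπ, h3, h1]
    omega
  obtain ⟨j, hj, hex⟩ := exchange cs hred hdesc
  match j with
  | 0 =>
    rw [hπ] at hex
    simpa [← hu] using hex
  | k + 1 =>
    exfalso
    rw [hπ, List.eraseIdx_cons_succ, cs.wordProd_cons] at hex
    have hus : u * cs.simple i = cs.wordProd (ω.eraseIdx k) := by
      have h' := congrArg (fun x => cs.simple i * x) hex
      simpa [← mul_assoc, cs.simple_mul_simple_cancel_left] using h'
    have hlen1 : cs.length (u * cs.simple i) ≤ (ω.eraseIdx k).length := by
      rw [hus]; exact cs.length_wordProd_le _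
    have hk : k < ω.length := by simpa using hj
    have := List.length_eraseIdx_add_one hk
    have hl2 : cs.length u = ω.length := by rw [hu]; exact hl
    omega

theorem main (w : W) (hw : w * w = 1) (i : B)
    (hlen : cs.length (cs.simple i * w * cs.simple i) = cs.length w) :
    cs.simple i * w * cs.simple i = w := by
  have hwinv : w⁻¹ = w := inv_eq_of_mul_eq_one_right hw
  have hsym : cs.length (w * cs.simple i) = cs.length (cs.simple i * w) := by
    conv_lhs => rw [← cs.length_inv, mul_inv_rev, cs.inv_simple, hwinv]
  rcases cs.length_simple_mul w i with h | h
  · exact claim cs w i h (hsym.trans h) hlen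
  · -- ℓ (s i * w) + 1 = ℓ w
    have h1 : cs.length (cs.simple i * (cs.simple i * w))
        = cs.length (cs.simple i * w) + 1 := by
      rw [cs.simple_mul_simple_cancel_left]; omega
    have h2 : cs.length ((cs.simple i * w) * cs.simple i)
        = cs.length (cs.simple i * w) + 1 := by
      rw [mul_assoc] at hlen ⊢
      rw [hlen]
      omega
    have h3 : cs.length (cs.simple i * (cs.simple i * w) * cs.simple i)
        = cs.length (cs.simple i * w) := by
      rw [cs.simple_mul_simple_cancel_left]
      exact hsym
    have hcl := claim cs (cs.simple i * w) i h1 h2 h3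
    rw [cs.simple_mul_simple_cancel_left] at hcl
    -- hcl : (s i * w) * s i ... need : w * s i = s i * w
    rw [mul_assoc, hcl, cs.simple_mul_simple_cancel_left]

end Stmt5Aux

/-- If `w` is an involution, `s` a simple reflection, `ℓ(sws) = ℓ(w)` and `sws` is an
involution, then `sws = w`. -/
theorem stmt5 {B W : Type*} [Group W] [Finite W] {M : CoxeterMatrix B}
    (cs : CoxeterSystem M W) (w : W) (hw : w * w = 1) (i : B)
    (hlen : cs.length (cs.simple i * w * cs.simple i) = cs.length w)
    (hinv : (cs.simple i * w * cs.simple i) * (cs.simple i * w * cs.simple i) = 1) :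
    cs.simple i * w * cs.simple i = w := by
  exact Stmt5Aux.main cs w hw i hlen
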